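/- Let p₁, p₂, p₃ ∈ ℍ^{n+1} be nonzero vectors with ⟨pᵢ,pᵢ⟩ ≤ 0 for i = 1,2,3, pairwise non-proportional. Then the quaternionic triple product ⟨p₁,p₂,p₃⟩ = ⟨p₂,p₁⟩⟨p₃,p₂⟩⟨p₁,p₃⟩ is a nonzero quaternion and Re(⟨p₁,p₂,p₃⟩) ≤ 0. -/

import Mathlib

open scoped Quaternion

noncomputable section

/-- The quaternionic Hermitian form of signature (n,1) on ℍ^{n+1}:
`⟨z,w⟩ = w̄₁ z_{n+1} + Σ_{i=2}^n w̄ᵢ zᵢ + w̄_{n+1} z₁`. -/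
noncomputable def herm {n : ℕ} (z w : Fin (n+1) → ℍ[ℝ]) : ℍ[ℝ] :=
  star (w 0) * z (Fin.last n)
    + ∑ i ∈ Finset.Ioo (0 : Fin (n+1)) (Fin.last n), star (w i) * z i
    + star (w (Fin.last n)) * z 0

/-- `w` is (right-)proportional to `z`: `w = zλ` for some `λ ∈ ℍ`. -/
def Prp {n : ℕ} (z w : Fin (n+1) → ℍ[ℝ]) : Prop :=
  ∃ lam : ℍ[ℝ], w = fun i => z i * lam

/-- Right scalar multiplication on ℍ^{n+1}. -/
noncomputable def smulR {n : ℕ} (z : Fin (n+1) → ℍ[ℝ]) (lam : ℍ[ℝ]) :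
    Fin (n+1) → ℍ[ℝ] := fun i => z i * lam

/-- The quaternionic triple product `⟨p₁,p₂,p₃⟩ = ⟨p₂,p₁⟩⟨p₃,p₂⟩⟨p₁,p₃⟩`. -/
noncomputable def tri {n : ℕ} (p₁ p₂ p₃ : Fin (n+1) → ℍ[ℝ]) : ℍ[ℝ] :=
  herm p₂ p₁ * herm p₃ p₂ * herm p₁ p₃

/-- The quaternionic Cartan angular invariant
`𝔸(p₁,p₂,p₃) = arccos(Re(−⟨p₁,p₂,p₃⟩)/|⟨p₁,p₂,p₃⟩|)`. -/
noncomputable def cartan {n : ℕ} (p₁ p₂ p₃ : Fin (n+1) → ℍ[ℝ]) : ℝ :=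
  Real.arccos ((-(tri p₁ p₂ p₃)).re / ‖tri p₁ p₂ p₃‖)

/-- The quaternionic cross-ratio `𝕏(p₁,p₂,p₃,p₄) = ⟨p₃,p₁⟩⟨p₃,p₂⟩⁻¹⟨p₄,p₂⟩⟨p₄,p₁⟩⁻¹`. -/
noncomputable def crossX {n : ℕ} (p₁ p₂ p₃ p₄ : Fin (n+1) → ℍ[ℝ]) : ℍ[ℝ] :=
  herm p₃ p₁ * (herm p₃ p₂)⁻¹ * herm p₄ p₂ * (herm p₄ p₁)⁻¹

/-- The group Sp(n,1) of quaternionic matrices preserving the Hermitian form. -/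
def SpGrp (n : ℕ) : Set (Matrix (Fin (n+1)) (Fin (n+1)) ℍ[ℝ]) :=
  {g | ∀ z w : Fin (n+1) → ℍ[ℝ], herm (g.mulVec z) (g.mulVec w) = herm z w}

/-- Similarity of quaternions: `b = μ a μ⁻¹` for some nonzero `μ`. -/
def QSim (a b : ℍ[ℝ]) : Prop := ∃ mu : ℍ[ℝ], mu ≠ 0 ∧ b = mu * a * mu⁻¹

namespace Stmt1Aux
variable {n : ℕ}

def sp (z : Fin (n+1) → ℍ[ℝ]) : ℍ[ℝ] := z 0 + z (Fin.last n)
def dm (z : Fin (n+1) → ℍ[ℝ]) : ℍ[ℝ] := z 0 - z (Fin.last n)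

noncomputable def Pf (v z : Fin (n+1) → ℍ[ℝ]) : ℍ[ℝ] :=
  star (sp z) * sp v
    + 2 * ∑ i ∈ Finset.Ioo (0 : Fin (n+1)) (Fin.last n), star (z i) * v i

lemma key_identity (v z : Fin (n+1) → ℍ[ℝ]) :
    2 * herm v z = Pf v z - star (dm z) * dm v := by
  unfold herm Pf sp dm
  simp only [star_add, star_sub]
  noncomm_ring

lemma herm_star (v z : Fin (n+1) → ℍ[ℝ]) : star (herm v z) = herm z v := by
  unfold herm
  simp only [star_add, star_mul, star_star, star_sum]
  abel

lemma Pf_star (v z : Fin (n+1) → ℍ[ℝ]) : star (Pf v z) = Pf z v := by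
  unfold Pf
  simp only [star_add, star_mul, star_star, star_sum, star_ofNat]
  simp only [two_mul, mul_two]


lemma coe_sum {α : Type*} (s : Finset α) (f : α → ℝ) :
    ((∑ i ∈ s, f i : ℝ) : ℍ[ℝ]) = ∑ i ∈ s, ((f i : ℝ) : ℍ[ℝ]) := by
  induction s using Finset.cons_induction with
  | empty => simp
  | cons a s h ih => rw [Finset.sum_cons, Finset.sum_cons, Quaternion.coe_add, ih]

lemma Pf_self (u : Fin (n+1) → ℍ[ℝ]) :
    Pf u u = ((Quaternion.normSq (sp u)
      + 2 * ∑ i ∈ Finset.Ioo (0 : Fin (n+1)) (Fin.last n), Quaternion.normSq (u i) : ℝ) : ℍ[ℝ]) := by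
  unfold Pf
  push_cast
  rw [Quaternion.star_mul_self]
  congr 1
  rw [Finset.sum_congr rfl (fun i _ => Quaternion.star_mul_self (u i)),
    coe_sum]
  norm_cast

lemma Pf_self_re_nonneg (u : Fin (n+1) → ℍ[ℝ]) : 0 ≤ (Pf u u).re := by
  rw [Pf_self, Quaternion.re_coe]
  have h : 0 ≤ ∑ i ∈ Finset.Ioo (0 : Fin (n+1)) (Fin.last n), Quaternion.normSq (u i) :=
    Finset.sum_nonneg fun i _ => Quaternion.normSq_nonneg
  have := Quaternion.normSq_nonneg (a := sp u)
  linarith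

lemma Pf_self_re_eq_zero {u : Fin (n+1) → ℍ[ℝ]} (h : (Pf u u).re = 0) :
    sp u = 0 ∧ ∀ i ∈ Finset.Ioo (0 : Fin (n+1)) (Fin.last n), u i = 0 := by
  rw [Pf_self, Quaternion.re_coe] at h
  have hs : 0 ≤ ∑ i ∈ Finset.Ioo (0 : Fin (n+1)) (Fin.last n), Quaternion.normSq (u i) :=
    Finset.sum_nonneg fun i _ => Quaternion.normSq_nonneg
  have hn := Quaternion.normSq_nonneg (a := sp u)
  constructor
  · have : Quaternion.normSq (sp u) = 0 := by linarith
    exact Quaternion.normSq_eq_zero.mp this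
  · have hz : ∑ i ∈ Finset.Ioo (0 : Fin (n+1)) (Fin.last n), Quaternion.normSq (u i) = 0 := by
      linarith
    intro i hi
    have := (Finset.sum_eq_zero_iff_of_nonneg
      (fun i _ => Quaternion.normSq_nonneg (a := u i))).mp hz i hi
    exact Quaternion.normSq_eq_zero.mp this

lemma eq_zero_of (u : Fin (n+1) → ℍ[ℝ]) (h1 : sp u = 0) (h2 : dm u = 0)
    (h3 : ∀ i ∈ Finset.Ioo (0 : Fin (n+1)) (Fin.last n), u i = 0) : u = 0 := by
  unfold sp at h1
  unfold dm at h2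
  funext i
  by_cases hi0 : i = 0
  · subst hi0
    have : u 0 + u 0 = 0 := by
      have := congrArg₂ (· + ·) h1 h2
      simpa [add_add_sub_cancel] using this
    have h4 : (2 : ℝ) • u 0 = 0 := by rw [two_smul]; exact this
    simpa using (smul_eq_zero.mp h4).resolve_left (by norm_num)
  · by_cases hil : i = Fin.last n
    · subst hil
      have : u (Fin.last n) + u (Fin.last n) = 0 := by
        have := congrArg₂ (· - ·) h1 h2
        simpa [add_sub_sub_cancel] using this
      have h4 : (2 : ℝ) • u (Fin.last n) = 0 := by rw [two_smul]; exact this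
      simpa using (smul_eq_zero.mp h4).resolve_left (by norm_num)
    · exact h3 i (Finset.mem_Ioo.mpr ⟨Fin.pos_iff_ne_zero.mpr hi0, Fin.lt_last_iff_ne_last.mpr hil⟩)

lemma Pf_expand (w z : Fin (n+1) → ℍ[ℝ]) (l : ℍ[ℝ]) :
    Pf (fun i => w i - z i * l) (fun i => w i - z i * l)
      = Pf w w - Pf z w * l - star l * Pf w z + star l * Pf z z * l := by
  unfold Pf sp
  simp only [star_sub, star_mul, sub_mul, mul_sub, Finset.sum_sub_distrib,
    Finset.sum_mul, Finset.mul_sum, add_mul, mul_add, star_add]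
  noncomm_ring

lemma herm_lin_left (p q z : Fin (n+1) → ℍ[ℝ]) (a c : ℍ[ℝ]) :
    herm (fun i => p i * a - q i * c) z = herm p z * a - herm q z * c := by
  unfold herm
  simp only [mul_sub, sub_mul, add_mul, Finset.sum_sub_distrib, Finset.sum_mul,
    mul_assoc]
  noncomm_ring

lemma herm_expand (p q : Fin (n+1) → ℍ[ℝ]) (a c : ℍ[ℝ]) :
    herm (fun i => p i * a - q i * c) (fun i => p i * a - q i * c)
      = star a * herm p p * a - star c * herm p q * a
        - star a * herm q p * c + star c * herm q q * c := by
  unfold herm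
  simp only [star_sub, star_mul, sub_mul, mul_sub, Finset.sum_sub_distrib,
    Finset.sum_mul, Finset.mul_sum, add_mul, mul_add, star_add]
  noncomm_ring

lemma herm_self_real (z : Fin (n+1) → ℍ[ℝ]) : herm z z = (((herm z z).re : ℝ) : ℍ[ℝ]) :=
  Quaternion.star_eq_self.mp (herm_star z z)

lemma Pf_cs {v z : Fin (n+1) → ℍ[ℝ]} (hz : 0 < (Pf z z).re) :
    Quaternion.normSq (Pf v z) ≤ (Pf v v).re * (Pf z z).re := by
  set r : ℝ := (Pf z z).re with hr
  set q : ℍ[ℝ] := Pf v z with hq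
  set l : ℍ[ℝ] := (r⁻¹ : ℝ) • q with hl
  have hPzz : Pf z z = ((r : ℝ) : ℍ[ℝ]) := by
    rw [hr]
    exact Quaternion.star_eq_self.mp (Pf_star z z)
  have h0 := Pf_self_re_nonneg (fun i => v i - z i * l)
  rw [Pf_expand v z l] at h0
  have hzv : Pf z v = star q := by rw [hq, Pf_star]
  have hstarl : star l = (r⁻¹ : ℝ) • star q := by rw [hl, Quaternion.star_smul]
  have e1 : Pf z v * l = (r⁻¹ : ℝ) • ((Quaternion.normSq q : ℝ) : ℍ[ℝ]) := by
    rw [hzv, hl, mul_smul_comm, Quaternion.star_mul_self]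
  have e2 : star l * Pf v z = (r⁻¹ : ℝ) • ((Quaternion.normSq q : ℝ) : ℍ[ℝ]) := by
    rw [hstarl, smul_mul_assoc, ← hq, Quaternion.star_mul_self]
  have e3 : star l * Pf z z * l = (r⁻¹ : ℝ) • ((Quaternion.normSq q : ℝ) : ℍ[ℝ]) := by
    rw [hstarl, hPzz, hl, smul_mul_assoc, smul_mul_assoc, mul_smul_comm,
      mul_assoc, Quaternion.coe_mul_eq_smul, mul_smul_comm, Quaternion.star_mul_self,
      smul_smul, smul_smul]
    congr 1
    field_simp
  rw [e1, e2, e3] at h0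
  have h1 : 0 ≤ (Pf v v).re - r⁻¹ * Quaternion.normSq q := by
    simpa [Quaternion.re_sub, Quaternion.re_add, Quaternion.re_smul, Quaternion.re_coe,
      smul_eq_mul] using h0
  have h2 : r⁻¹ * Quaternion.normSq q ≤ (Pf v v).re := by linarith
  calc Quaternion.normSq q = (r⁻¹ * Quaternion.normSq q) * r := by
        field_simp
      _ ≤ (Pf v v).re * r := mul_le_mul_of_nonneg_right h2 (le_of_lt hz)

lemma herm_re_eq (v z : Fin (n+1) → ℍ[ℝ]) :
    (herm v z).re + (herm v z).re = (Pf v z).re - (star (dm z) * dm v).re := by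
  have h := congrArg QuaternionAlgebra.re (key_identity v z)
  rw [two_mul, Quaternion.re_add, Quaternion.re_sub] at h
  linarith [h]

lemma herm_re_self (z : Fin (n+1) → ℍ[ℝ]) :
    (herm z z).re + (herm z z).re = (Pf z z).re - Quaternion.normSq (dm z) := by
  have h := herm_re_eq z z
  rwa [Quaternion.star_mul_self, Quaternion.re_coe] at h

lemma dm_ne {z : Fin (n+1) → ℍ[ℝ]} (hz : z ≠ 0) (hneg : (herm z z).re ≤ 0) :
    dm z ≠ 0 := by
  intro h
  have hk := herm_re_self z
  rw [h, map_zero] at hk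
  have h1 := Pf_self_re_nonneg z
  have h2 : (Pf z z).re = 0 := by linarith
  obtain ⟨hsp, hmid⟩ := Pf_self_re_eq_zero h2
  exact hz (eq_zero_of z hsp h hmid)

lemma ortho {z v : Fin (n+1) → ℍ[ℝ]} (hz : z ≠ 0) (hneg : (herm z z).re ≤ 0)
    (hvz : herm v z = 0) : 0 ≤ (herm v v).re := by
  have hdz := dm_ne hz hneg
  have hPvz : Pf v z = star (dm z) * dm v := by
    have h := key_identity v z
    rw [hvz, mul_zero] at h
    exact (sub_eq_zero.mp h.symm)
  have hselfz : (Pf z z).re ≤ Quaternion.normSq (dm z) := by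
    have := herm_re_self z; linarith
  rcases eq_or_lt_of_le (Pf_self_re_nonneg z) with h0 | hpos
  · obtain ⟨hsp, hmid⟩ := Pf_self_re_eq_zero h0.symm
    have hP0 : Pf v z = 0 := by
      have hterm : ∀ i ∈ Finset.Ioo (0 : Fin (n+1)) (Fin.last n), star (z i) * v i = 0 :=
        fun i hi => by rw [hmid i hi, star_zero, zero_mul]
      unfold Pf
      rw [hsp, star_zero, zero_mul, Finset.sum_eq_zero hterm, mul_zero, add_zero]
    have hdmv : dm v = 0 := by
      have h2 : star (dm z) * dm v = 0 := by rw [← hPvz, hP0]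
      rcases mul_eq_zero.mp h2 with h | h
      · exact absurd (star_eq_zero.mp h) hdz
      · exact h
    have h3 := herm_re_self v
    rw [hdmv, map_zero] at h3
    have := Pf_self_re_nonneg v
    linarith
  · have hcs := Pf_cs (v := v) hpos
    have hnsq : Quaternion.normSq (Pf v z)
        = Quaternion.normSq (dm z) * Quaternion.normSq (dm v) := by
      rw [hPvz, map_mul, Quaternion.normSq_star]
    have hvv := Pf_self_re_nonneg v
    have hdznz : 0 < Quaternion.normSq (dm z) :=
      lt_of_le_of_ne Quaternion.normSq_nonneg (Ne.symm (Quaternion.normSq_ne_zero.mpr hdz))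
    have step : Quaternion.normSq (dm z) * Quaternion.normSq (dm v)
        ≤ (Pf v v).re * Quaternion.normSq (dm z) := by
      calc Quaternion.normSq (dm z) * Quaternion.normSq (dm v)
          ≤ (Pf v v).re * (Pf z z).re := hnsq ▸ hcs
        _ ≤ (Pf v v).re * Quaternion.normSq (dm z) :=
            mul_le_mul_of_nonneg_left hselfz hvv
    have hle : Quaternion.normSq (dm v) ≤ (Pf v v).re := by nlinarith
    have h3 := herm_re_self v
    linarith

lemma pairing_ne {z w : Fin (n+1) → ℍ[ℝ]} (hz : z ≠ 0) (hw : w ≠ 0)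
    (hnz : (herm z z).re ≤ 0) (hnw : (herm w w).re ≤ 0) (hp : ¬ Prp z w) :
    herm w z ≠ 0 := by
  intro h0
  have hzw : herm z w = 0 := by rw [← herm_star, h0, star_zero]
  have hdz := dm_ne hz hnz
  have hdw := dm_ne hw hnw
  have hw0 : (herm w w).re = 0 := le_antisymm hnw (ortho hz hnz h0)
  set l : ℍ[ℝ] := (dm z)⁻¹ * dm w with hl
  have hPwz : Pf w z = star (dm z) * dm w := by
    have h := key_identity w z
    rw [h0, mul_zero] at h
    exact (sub_eq_zero.mp h.symm)
  have hPzw : Pf z w = star (dm w) * dm z := by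
    have h := key_identity z w
    rw [hzw, mul_zero] at h
    exact (sub_eq_zero.mp h.symm)
  have e1 : Pf z w * l = ((Quaternion.normSq (dm w) : ℝ) : ℍ[ℝ]) := by
    rw [hPzw, hl, mul_assoc, ← mul_assoc (dm z), mul_inv_cancel₀ hdz, one_mul,
      Quaternion.star_mul_self]
  have e2 : star l * Pf w z = ((Quaternion.normSq (dm w) : ℝ) : ℍ[ℝ]) := by
    have e2' : star (star l * Pf w z) = ((Quaternion.normSq (dm w) : ℝ) : ℍ[ℝ]) := by
      rw [star_mul, star_star, Pf_star]
      exact e1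
    have := congrArg star e2'
    rwa [star_star, Quaternion.star_coe] at this
  have hPzzreal : Pf z z = (((Pf z z).re : ℝ) : ℍ[ℝ]) :=
    Quaternion.star_eq_self.mp (Pf_star z z)
  have e3 : (star l * Pf z z * l).re = (Pf z z).re * Quaternion.normSq l := by
    rw [hPzzreal, mul_assoc, Quaternion.coe_mul_eq_smul, mul_smul_comm,
      Quaternion.star_mul_self, Quaternion.re_smul, Quaternion.re_coe, smul_eq_mul,
      Quaternion.re_coe]
  have hnl : Quaternion.normSq l
      = (Quaternion.normSq (dm z))⁻¹ * Quaternion.normSq (dm w) := by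
    rw [hl, map_mul, Quaternion.normSq_inv]
  have hPuu := congrArg QuaternionAlgebra.re (Pf_expand w z l)
  rw [Quaternion.re_add, Quaternion.re_sub, Quaternion.re_sub, e1, e2, e3,
    Quaternion.re_coe] at hPuu
  have hPww : (Pf w w).re = Quaternion.normSq (dm w) := by
    have := herm_re_self w; rw [hw0] at this; linarith
  have hPzzle : (Pf z z).re ≤ Quaternion.normSq (dm z) := by
    have := herm_re_self z; linarith
  have hPzznn : 0 ≤ (Pf z z).re := Pf_self_re_nonneg z
  have hdznz : 0 < Quaternion.normSq (dm z) :=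
    lt_of_le_of_ne Quaternion.normSq_nonneg (Ne.symm (Quaternion.normSq_ne_zero.mpr hdz))
  have hdwnz : 0 < Quaternion.normSq (dm w) :=
    lt_of_le_of_ne Quaternion.normSq_nonneg (Ne.symm (Quaternion.normSq_ne_zero.mpr hdw))
  have hunn := Pf_self_re_nonneg (fun i => w i - z i * l)
  have huz : (Pf (fun i => w i - z i * l) (fun i => w i - z i * l)).re = 0 := by
    have hbound : (Pf z z).re * Quaternion.normSq l ≤ Quaternion.normSq (dm w) := by
      rw [hnl]
      rw [← mul_assoc]
      have h1 : (Pf z z).re * (Quaternion.normSq (dm z))⁻¹ ≤ 1 := by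
        rw [← div_eq_mul_inv, div_le_one hdznz]; exact hPzzle
      nlinarith
    have : (Pf (fun i => w i - z i * l) (fun i => w i - z i * l)).re ≤ 0 := by
      rw [hPuu, hPww]; linarith
    linarith
  obtain ⟨hsp, hmid⟩ := Pf_self_re_eq_zero huz
  have hdmu : dm (fun i => w i - z i * l) = 0 := by
    unfold dm
    have : (w 0 - z 0 * l) - (w (Fin.last n) - z (Fin.last n) * l)
        = (w 0 - w (Fin.last n)) - (z 0 - z (Fin.last n)) * l := by noncomm_ring
    rw [this]
    show dm w - dm z * l = 0
    rw [hl, ← mul_assoc, mul_inv_cancel₀ hdz, one_mul, sub_self]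
  have hu0 := eq_zero_of _ hsp hdmu hmid
  apply hp
  refine ⟨l, funext fun i => ?_⟩
  have := congrFun hu0 i
  simp only [Pi.zero_apply] at this
  have h5 : w i - z i * l = 0 := this
  exact sub_eq_zero.mp h5
lemma re_mul_comm (a b : ℍ[ℝ]) : (a * b).re = (b * a).re := by
  simp only [Quaternion.re_mul]; ring

lemma inv_eq (q : ℍ[ℝ]) : q⁻¹ = (Quaternion.normSq q)⁻¹ • star q :=
  Quaternion.inv_def q

end Stmt1Aux

open Stmt1Aux

/-- For nonzero, pairwise non-proportional `p₁,p₂,p₃` with `⟨pᵢ,pᵢ⟩ ≤ 0`,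
the triple product `⟨p₁,p₂,p₃⟩` is nonzero and has nonpositive real part. -/
theorem stmt1 {n : ℕ} (hn : 2 ≤ n) (p₁ p₂ p₃ : Fin (n+1) → ℍ[ℝ])
    (h1 : p₁ ≠ 0) (h2 : p₂ ≠ 0) (h3 : p₃ ≠ 0)
    (hg1 : (herm p₁ p₁).re ≤ 0) (hg2 : (herm p₂ p₂).re ≤ 0) (hg3 : (herm p₃ p₃).re ≤ 0)
    (h12 : ¬ Prp p₁ p₂) (h13 : ¬ Prp p₁ p₃) (h23 : ¬ Prp p₂ p₃) :
    tri p₁ p₂ p₃ ≠ 0 ∧ (tri p₁ p₂ p₃).re ≤ 0 := by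
  have e21 : herm p₂ p₁ ≠ 0 := pairing_ne h1 h2 hg1 hg2 h12
  have e32 : herm p₃ p₂ ≠ 0 := pairing_ne h2 h3 hg2 hg3 h23
  have e31 : herm p₃ p₁ ≠ 0 := pairing_ne h1 h3 hg1 hg3 h13
  have e13 : herm p₁ p₃ ≠ 0 := fun h => e31 (by rw [← herm_star, h, star_zero])
  have e12 : herm p₁ p₂ ≠ 0 := fun h => e21 (by rw [← herm_star, h, star_zero])
  refine ⟨mul_ne_zero (mul_ne_zero e21 e32) e13, ?_⟩
  set u := herm p₁ p₂ with hu
  set w := herm p₃ p₂ with hw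
  set X := herm p₁ p₃ with hX
  have hv2 : herm (fun i => p₁ i * u⁻¹ - p₃ i * w⁻¹) p₂ = 0 := by
    rw [herm_lin_left, ← hu, ← hw, mul_inv_cancel₀ e12, mul_inv_cancel₀ e32, sub_self]
  have hvv := ortho h2 hg2 hv2
  rw [herm_expand] at hvv
  have hA := herm_self_real p₁
  have hC := herm_self_real p₃
  have term1 : (star u⁻¹ * herm p₁ p₁ * u⁻¹).re
      = (herm p₁ p₁).re * Quaternion.normSq u⁻¹ := by
    rw [hA, mul_assoc, Quaternion.coe_mul_eq_smul, mul_smul_comm,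
      Quaternion.star_mul_self, Quaternion.re_smul, Quaternion.re_coe, smul_eq_mul,
      Quaternion.re_coe]
  have term4 : (star w⁻¹ * herm p₃ p₃ * w⁻¹).re
      = (herm p₃ p₃).re * Quaternion.normSq w⁻¹ := by
    rw [hC, mul_assoc, Quaternion.coe_mul_eq_smul, mul_smul_comm,
      Quaternion.star_mul_self, Quaternion.re_smul, Quaternion.re_coe, smul_eq_mul,
      Quaternion.re_coe]
  have cross2 : (star u⁻¹ * herm p₃ p₁ * w⁻¹).re = (star w⁻¹ * X * u⁻¹).re := by
    have hst : star u⁻¹ * herm p₃ p₁ * w⁻¹ = star (star w⁻¹ * X * u⁻¹) := by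
      rw [star_mul, star_mul, star_star, hX, herm_star, mul_assoc]
    rw [hst, Quaternion.re_star]
  rw [Quaternion.re_add, Quaternion.re_sub, Quaternion.re_sub, term1, term4, cross2] at hvv
  have hcross : (star w⁻¹ * X * u⁻¹).re ≤ 0 := by
    have hb1 : (herm p₁ p₁).re * Quaternion.normSq u⁻¹ ≤ 0 :=
      mul_nonpos_of_nonpos_of_nonneg hg1 Quaternion.normSq_nonneg
    have hb2 : (herm p₃ p₃).re * Quaternion.normSq w⁻¹ ≤ 0 :=
      mul_nonpos_of_nonpos_of_nonneg hg3 Quaternion.normSq_nonneg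
    linarith
  have hwinv : star w⁻¹ = (Quaternion.normSq w)⁻¹ • w := by
    rw [inv_eq, Quaternion.star_smul, star_star]
  have huinv : u⁻¹ = (Quaternion.normSq u)⁻¹ • star u := inv_eq u
  have hre : (star w⁻¹ * X * u⁻¹).re
      = (Quaternion.normSq w)⁻¹ * (Quaternion.normSq u)⁻¹ * (tri p₁ p₂ p₃).re := by
    rw [hwinv, huinv, smul_mul_assoc, smul_mul_assoc, mul_smul_comm, smul_smul,
      Quaternion.re_smul, smul_eq_mul]
    have h7 : tri p₁ p₂ p₃ = star u * (w * X) := by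
      rw [tri, ← herm_star p₁ p₂, ← hu, ← hw, ← hX, mul_assoc]
    have h6 : (w * X * star u).re = (tri p₁ p₂ p₃).re := by
      rw [h7]; exact re_mul_comm (w * X) (star u)
    rw [h6]
  have hupos : 0 < Quaternion.normSq u :=
    lt_of_le_of_ne Quaternion.normSq_nonneg (Ne.symm (Quaternion.normSq_ne_zero.mpr e12))
  have hwpos : 0 < Quaternion.normSq w :=
    lt_of_le_of_ne Quaternion.normSq_nonneg (Ne.symm (Quaternion.normSq_ne_zero.mpr e32))
  rw [hre] at hcross
  have hfac : 0 < (Quaternion.normSq w)⁻¹ * (Quaternion.normSq u)⁻¹ :=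
    mul_pos (inv_pos.mpr hwpos) (inv_pos.mpr hupos)
  nlinarith [hcross, hfac]
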